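/- Let ρ_t be the solution of dρ_t/dt = L(ρ_t) + Tr[J(ρ_t)]ρ_t − J(ρ_t) with state-valued initial condition. If ρ_{t₀} is a one-dimensional projector for some t₀ ≥ 0, then ρ_t is a one-dimensional projector (pure state) for all t ≥ t₀. -/

import Mathlib

open Matrix
open scoped ComplexOrder

/-- The vector field `f(ρ) = L(ρ) + Tr[J(ρ)]ρ − J(ρ)` of the deterministic part of the
jump Belavkin equation. -/
noncomputable def belavkinField (H₀ C ρ : Matrix (Fin 2) (Fin 2) ℂ) : Matrix (Fin 2) (Fin 2) ℂ :=
  ((-Complex.I) • (H₀ * ρ - ρ * H₀) - (1/2 : ℂ) • (Cᴴ * C * ρ + ρ * (Cᴴ * C)) + C * ρ * Cᴴ)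
    + (C * ρ * Cᴴ).trace • ρ - C * ρ * Cᴴ

/-- A pure state: a rank-one orthogonal projector `|x⟩⟨x|` with `‖x‖ = 1`. -/
def IsPureState (ρ : Matrix (Fin 2) (Fin 2) ℂ) : Prop :=
  ∃ x : EuclideanSpace ℂ (Fin 2), ‖x‖ = 1 ∧ ρ = vecMulVec x (star x)

open Set in
/-- Grönwall: a function with `‖f'‖ ≤ K ‖f‖` vanishing at `a` vanishes on `[a,b]`. -/
lemma gronwall_zero {E : Type*} [NormedAddCommGroup E] [NormedSpace ℝ E] {f f' : ℝ → E}
    {a b K : ℝ}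
    (hf : ContinuousOn f (Icc a b))
    (hf' : ∀ t ∈ Ico a b, HasDerivWithinAt f (f' t) (Ici t) t)
    (ha : f a = 0)
    (bound : ∀ t ∈ Ico a b, ‖f' t‖ ≤ K * ‖f t‖) :
    ∀ t ∈ Icc a b, f t = 0 := by
  intro t ht
  have h := norm_le_gronwallBound_of_norm_deriv_right_le (δ := 0) (ε := 0) (K := K) hf hf'
    (by simp [ha]) (fun x hx => by simpa using bound x hx) t ht
  rw [gronwallBound_ε0] at h
  have : ‖f t‖ ≤ 0 := by simpa using h
  simpa using le_antisymm this (norm_nonneg _)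

set_option maxHeartbeats 1000000 in
lemma trace_field (H₀ C ρ : Matrix (Fin 2) (Fin 2) ℂ) :
    (belavkinField H₀ C ρ).trace = (C * ρ * Cᴴ).trace * (ρ.trace - 1) := by
  simp only [belavkinField, Matrix.trace, Matrix.diag, Fin.sum_univ_two,
    Matrix.add_apply, Matrix.sub_apply, Matrix.smul_apply, Matrix.mul_apply,
    conjTranspose_apply, smul_eq_mul]
  ring

set_option maxHeartbeats 2000000 in
/-- The derivative of `ρ² - ρ` along the flow, in linear form. -/
lemma field_sq_identity (H₀ C ρ : Matrix (Fin 2) (Fin 2) ℂ) :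
    belavkinField H₀ C ρ * ρ + ρ * belavkinField H₀ C ρ - belavkinField H₀ C ρ =
      ((-Complex.I) • H₀ - (1/2 : ℂ) • (Cᴴ * C)) * (ρ * ρ - ρ)
      + (ρ * ρ - ρ) * (Complex.I • H₀ - (1/2 : ℂ) • (Cᴴ * C))
      + (2 * (C * ρ * Cᴴ).trace) • (ρ * ρ - ρ)
      + ρ.det • ((Cᴴ * C).trace • (1 : Matrix (Fin 2) (Fin 2) ℂ) - Cᴴ * C) := by
  ext i j
  fin_cases i <;> fin_cases j <;>
  · simp only [belavkinField, Matrix.trace, Matrix.diag, Fin.sum_univ_two, Matrix.det_fin_two,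
      Matrix.add_apply, Matrix.sub_apply, Matrix.smul_apply, Matrix.mul_apply,
      Matrix.one_apply, conjTranspose_apply, smul_eq_mul, Fin.mk_zero, Fin.mk_one,
      Fin.isValue, if_true, one_ne_zero, if_false, zero_ne_one, ite_true, ite_false]
    ring

set_option maxHeartbeats 2000000 in
lemma field_sub_identity (H₀ C ρ B : Matrix (Fin 2) (Fin 2) ℂ) :
    belavkinField H₀ C ρ - belavkinField H₀ C B =
      ((-Complex.I) • H₀ - (1/2 : ℂ) • (Cᴴ * C)) * (ρ - B)
      + (ρ - B) * (Complex.I • H₀ - (1/2 : ℂ) • (Cᴴ * C))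
      + (C * (ρ - B) * Cᴴ).trace • ρ + (C * B * Cᴴ).trace • (ρ - B) := by
  ext i j
  fin_cases i <;> fin_cases j <;>
  · simp only [belavkinField, Matrix.trace, Matrix.diag, Fin.sum_univ_two,
      Matrix.add_apply, Matrix.sub_apply, Matrix.smul_apply, Matrix.mul_apply,
      conjTranspose_apply, smul_eq_mul, Fin.mk_zero, Fin.mk_one, Fin.isValue]
    ring

set_option maxHeartbeats 2000000 in
lemma field_conjTranspose (H₀ C ρ : Matrix (Fin 2) (Fin 2) ℂ) (hH : H₀.IsHermitian) :
    (belavkinField H₀ C ρ)ᴴ = belavkinField H₀ C ρᴴ := by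
  have h : ∀ i j : Fin 2, (starRingEnd ℂ) (H₀ i j) = H₀ j i := fun i j => by
    simpa [conjTranspose_apply, Complex.star_def] using congrFun (congrFun hH j) i
  ext i j
  fin_cases i <;> fin_cases j <;>
  · simp only [belavkinField, Matrix.trace, Matrix.diag, Fin.sum_univ_two,
      Matrix.add_apply, Matrix.sub_apply, Matrix.smul_apply, Matrix.mul_apply,
      conjTranspose_apply, smul_eq_mul, Fin.mk_zero, Fin.mk_one, Fin.isValue,
      star_add, star_sub, star_mul', star_star, Complex.star_def, map_add, map_sub,
      _root_.map_mul, Complex.conj_I, map_neg, map_div₀, _root_.map_one, map_ofNat,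
      Complex.conj_conj, h]
    ring

lemma det_eq_of_trace_one (ρ : Matrix (Fin 2) (Fin 2) ℂ) (htr : ρ.trace = 1) :
    ρ.det = -(((ρ*ρ - ρ) 0 0) + ((ρ*ρ - ρ) 1 1))/2 := by
  rw [Matrix.trace_fin_two] at htr
  simp only [Matrix.det_fin_two, Matrix.sub_apply, Matrix.mul_apply, Fin.sum_univ_two]
  linear_combination ((ρ 0 0 + ρ 1 1)/2) * htr

lemma conj_mul_self_eq (z : ℂ) : (starRingEnd ℂ) z * z = ((‖z‖^2 : ℝ) : ℂ) := by
  rw [mul_comm, Complex.mul_conj, Complex.normSq_eq_norm_sq]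

lemma pure_facts {ρ : Matrix (Fin 2) (Fin 2) ℂ} (h : IsPureState ρ) :
    ρ * ρ = ρ ∧ ρ.trace = 1 ∧ ρᴴ = ρ := by
  obtain ⟨x, hx, rfl⟩ := h
  have hsum : ‖x 0‖^2 + ‖x 1‖^2 = 1 := by
    rw [EuclideanSpace.norm_eq, Fin.sum_univ_two] at hx
    have := Real.sqrt_eq_one.mp hx
    linarith
  have hsumc : (starRingEnd ℂ) (x 0) * x 0 + (starRingEnd ℂ) (x 1) * x 1 = 1 := by
    rw [conj_mul_self_eq, conj_mul_self_eq]
    norm_cast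
  refine ⟨?_, ?_, ?_⟩
  · ext i j
    simp only [Matrix.mul_apply, vecMulVec_apply, Fin.sum_univ_two, Pi.star_apply,
      Complex.star_def]
    linear_combination (x i * (starRingEnd ℂ) (x j)) * hsumc
  · rw [Matrix.trace_fin_two]
    simp only [vecMulVec_apply, Pi.star_apply, Complex.star_def]
    linear_combination hsumc
  · ext i j
    simp [vecMulVec_apply, Complex.star_def, mul_comm]

lemma pure_of_proj_aux (P : Matrix (Fin 2) (Fin 2) ℂ) (hP : P * P = P)
    (htr : P.trace = 1) (hherm : Pᴴ = P) (j : Fin 2) (hj : P j j ≠ 0) : IsPureState P := by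
  have hc : ∀ i k : Fin 2, (starRingEnd ℂ) (P i k) = P k i := fun i k => by
    simpa [conjTranspose_apply, Complex.star_def] using congrFun (congrFun hherm k) i
  have hdiag : P j j = ((‖P 0 j‖^2 + ‖P 1 j‖^2 : ℝ) : ℂ) := by
    have h := congrFun (congrFun hP j) j
    rw [Matrix.mul_apply, Fin.sum_univ_two] at h
    rw [← h, show P j 0 = (starRingEnd ℂ) (P 0 j) from (hc 0 j).symm,
        show P j 1 = (starRingEnd ℂ) (P 1 j) from (hc 1 j).symm,
        mul_comm ((starRingEnd ℂ) (P 0 j)), mul_comm ((starRingEnd ℂ) (P 1 j)),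
        Complex.mul_conj, Complex.mul_conj]
    push_cast [Complex.normSq_eq_norm_sq]
    ring
  set S : ℝ := ‖P 0 j‖^2 + ‖P 1 j‖^2 with hS
  have hSpos : 0 < S := by
    rcases lt_or_eq_of_le (by positivity : (0:ℝ) ≤ S) with h | h
    · exact h
    · exact absurd (by rw [hdiag, ← h]; simp) hj
  have hrk : ∀ i k : Fin 2, P i k * P j j = P i j * P j k := by
    have h00 := congrFun (congrFun hP 0) 0
    have h11 := congrFun (congrFun hP 1) 1
    rw [Matrix.mul_apply, Fin.sum_univ_two] at h00 h11
    rw [Matrix.trace_fin_two] at htr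
    have htwo : ∀ m : Fin 2, m = 0 ∨ m = 1 := by decide
    intro i k
    rcases htwo i with rfl | rfl <;> rcases htwo k with rfl | rfl <;>
      rcases htwo j with rfl | rfl
    · ring
    · linear_combination -h11 + P 1 1 * htr
    · ring
    · ring
    · ring
    · ring
    · linear_combination -h00 + P 0 0 * htr
    · ring
  set r : ℝ := Real.sqrt S with hr
  have hrpos : 0 < r := Real.sqrt_pos.mpr hSpos
  have hr2 : r^2 = S := Real.sq_sqrt hSpos.le
  refine ⟨WithLp.toLp 2 (fun i => P i j / (r : ℂ)), ?_, ?_⟩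
  · rw [EuclideanSpace.norm_eq, Fin.sum_univ_two]
    have : ∀ i : Fin 2, ‖P i j / (r:ℂ)‖^2 = ‖P i j‖^2 / r^2 := fun i => by
      rw [norm_div, div_pow]; norm_num [abs_of_pos hrpos]
    rw [this 0, this 1, ← add_div, ← hS, ← hr2]
    rw [div_self (by positivity)]
    exact Real.sqrt_one
  · ext i k
    simp only [vecMulVec_apply, Pi.star_apply, Complex.star_def, map_div₀, hc i j]
    have hcr : (starRingEnd ℂ) ((r:ℝ):ℂ) = (r:ℂ) := Complex.conj_ofReal r
    rw [hcr, hc k j]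
    rw [div_mul_div_comm, ← Complex.ofReal_mul, ← sq, hr2, ← hdiag, eq_div_iff hj]
    exact hrk i k

lemma pure_of_proj (P : Matrix (Fin 2) (Fin 2) ℂ) (hP : P * P = P)
    (htr : P.trace = 1) (hherm : Pᴴ = P) : IsPureState P := by
  by_cases h : P 0 0 = 0
  · apply pure_of_proj_aux P hP htr hherm 1
    have h2 := htr
    rw [Matrix.trace_fin_two, h, zero_add] at h2
    rw [h2]; exact one_ne_zero
  · exact pure_of_proj_aux P hP htr hherm 0 h

noncomputable def esum (A : Matrix (Fin 2) (Fin 2) ℂ) : ℝ :=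
  ‖A 0 0‖ + ‖A 0 1‖ + ‖A 1 0‖ + ‖A 1 1‖

lemma esum_nonneg (A : Matrix (Fin 2) (Fin 2) ℂ) : 0 ≤ esum A := by
  unfold esum; positivity

lemma norm_entry_le_esum (A : Matrix (Fin 2) (Fin 2) ℂ) (i j : Fin 2) : ‖A i j‖ ≤ esum A := by
  have htwo : ∀ m : Fin 2, m = 0 ∨ m = 1 := by decide
  unfold esum
  rcases htwo i with rfl|rfl <;> rcases htwo j with rfl|rfl <;>
    linarith [norm_nonneg (A 0 0), norm_nonneg (A 0 1), norm_nonneg (A 1 0), norm_nonneg (A 1 1)]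

lemma norm_mul_entry_le (A B : Matrix (Fin 2) (Fin 2) ℂ) (b : ℝ)
    (hB : ∀ i j, ‖B i j‖ ≤ b) (i j : Fin 2) : ‖(A * B) i j‖ ≤ 2 * esum A * b := by
  rw [Matrix.mul_apply, Fin.sum_univ_two]
  calc ‖A i 0 * B 0 j + A i 1 * B 1 j‖ ≤ ‖A i 0 * B 0 j‖ + ‖A i 1 * B 1 j‖ := norm_add_le _ _
    _ = ‖A i 0‖ * ‖B 0 j‖ + ‖A i 1‖ * ‖B 1 j‖ := by rw [norm_mul, norm_mul]
    _ ≤ esum A * b + esum A * b :=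
        add_le_add (mul_le_mul (norm_entry_le_esum A i 0) (hB 0 j) (norm_nonneg _) (esum_nonneg A))
          (mul_le_mul (norm_entry_le_esum A i 1) (hB 1 j) (norm_nonneg _) (esum_nonneg A))
    _ = 2 * esum A * b := by ring

lemma norm_mul_entry_le' (A B : Matrix (Fin 2) (Fin 2) ℂ) (a : ℝ) (ha : 0 ≤ a)
    (hA : ∀ i j, ‖A i j‖ ≤ a) (i j : Fin 2) : ‖(A * B) i j‖ ≤ 2 * a * esum B := by
  rw [Matrix.mul_apply, Fin.sum_univ_two]
  calc ‖A i 0 * B 0 j + A i 1 * B 1 j‖ ≤ ‖A i 0 * B 0 j‖ + ‖A i 1 * B 1 j‖ := norm_add_le _ _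
    _ = ‖A i 0‖ * ‖B 0 j‖ + ‖A i 1‖ * ‖B 1 j‖ := by rw [norm_mul, norm_mul]
    _ ≤ a * esum B + a * esum B :=
        add_le_add (mul_le_mul (hA i 0) (norm_entry_le_esum B 0 j) (norm_nonneg _) ha)
          (mul_le_mul (hA i 1) (norm_entry_le_esum B 1 j) (norm_nonneg _) ha)
    _ = 2 * a * esum B := by ring

lemma norm_trace_triple_le (Cm Dm A : Matrix (Fin 2) (Fin 2) ℂ) (a : ℝ) (ha : 0 ≤ a)
    (hA : ∀ i j, ‖A i j‖ ≤ a) : ‖(Cm * A * Dm).trace‖ ≤ 8 * esum Cm * esum Dm * a := by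
  have h1 : ∀ i j, ‖(Cm * A) i j‖ ≤ 2 * esum Cm * a := norm_mul_entry_le Cm A a hA
  have h2 : ∀ i j, ‖((Cm * A) * Dm) i j‖ ≤ 2 * (2 * esum Cm * a) * esum Dm :=
    norm_mul_entry_le' (Cm * A) Dm _ (by have := esum_nonneg Cm; positivity) h1
  rw [Matrix.trace_fin_two]
  calc ‖(Cm * A * Dm) 0 0 + (Cm * A * Dm) 1 1‖
      ≤ ‖(Cm * A * Dm) 0 0‖ + ‖(Cm * A * Dm) 1 1‖ := norm_add_le _ _
    _ ≤ 2 * (2 * esum Cm * a) * esum Dm + 2 * (2 * esum Cm * a) * esum Dm :=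
        add_le_add (h2 0 0) (h2 1 1)
    _ = 8 * esum Cm * esum Dm * a := by ring

lemma norm_add₄_le' (a b c d : ℂ) : ‖a + b + c + d‖ ≤ ‖a‖ + ‖b‖ + ‖c‖ + ‖d‖ := by
  calc ‖a + b + c + d‖ ≤ ‖a + b + c‖ + ‖d‖ := norm_add_le _ _
    _ ≤ ‖a + b‖ + ‖c‖ + ‖d‖ := by gcongr; exact norm_add_le _ _
    _ ≤ ‖a‖ + ‖b‖ + ‖c‖ + ‖d‖ := by gcongr; exact norm_add_le _ _
open Set in
/-- If the solution of `dρ_t/dt = L(ρ_t) + Tr[J(ρ_t)]ρ_t − J(ρ_t)` with state-valued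
initial condition is a one-dimensional projector at some time `t₀ ≥ 0`, then it is a
one-dimensional projector (pure state) for all `t ≥ t₀`. -/
theorem stmt_6 (H₀ C : Matrix (Fin 2) (Fin 2) ℂ) (hH : H₀.IsHermitian)
    (ρ : ℝ → Matrix (Fin 2) (Fin 2) ℂ)
    (h₀ : (ρ 0).PosSemidef ∧ (ρ 0).trace = 1)
    (hode : ∀ t ≥ (0:ℝ), ∀ i j, HasDerivWithinAt (fun s => ρ s i j)
      (belavkinField H₀ C (ρ t) i j) (Set.Ici 0) t)
    (t₀ : ℝ) (ht₀ : 0 ≤ t₀) (hpure : IsPureState (ρ t₀)) :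
    ∀ t ≥ t₀, IsPureState (ρ t) := by
  obtain ⟨hPP₀, hTr₀, hHerm₀⟩ := pure_facts hpure
  intro T hT
  have hsub : Icc t₀ T ⊆ Ici (0:ℝ) := fun s hs => le_trans ht₀ hs.1
  have hode' : ∀ s ∈ Ico t₀ T, ∀ i j, HasDerivWithinAt (fun r => ρ r i j)
      (belavkinField H₀ C (ρ s) i j) (Ici s) s := fun s hs i j =>
    (hode s (le_trans ht₀ hs.1) i j).mono (Ici_subset_Ici.mpr (le_trans ht₀ hs.1))
  have hcont : ∀ i j, ContinuousOn (fun r => ρ r i j) (Icc t₀ T) := fun i j s hs =>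
    ((hode s (hsub hs) i j).continuousWithinAt).mono hsub
  -- uniform bound on entries
  obtain ⟨M₀, hM₀⟩ := isCompact_Icc.exists_bound_of_continuousOn
    (f := fun s => (fun p : Fin 2 × Fin 2 => ρ s p.1 p.2))
    (continuousOn_pi.mpr fun p => hcont p.1 p.2)
  set M : ℝ := max M₀ 0 with hMdef
  have hMnn : 0 ≤ M := le_max_right _ _
  have hM : ∀ s ∈ Icc t₀ T, ∀ i j, ‖ρ s i j‖ ≤ M := fun s hs i j =>
    le_trans (le_trans (norm_le_pi_norm (fun p : Fin 2 × Fin 2 => ρ s p.1 p.2) (i, j)) (hM₀ s hs)) (le_max_left _ _)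
  have hMH : ∀ s ∈ Icc t₀ T, ∀ i j, ‖(ρ s)ᴴ i j‖ ≤ M := fun s hs i j => by
    rw [conjTranspose_apply, norm_star]; exact hM s hs j i
  set cC : ℝ := esum C with hcC
  set cD : ℝ := esum Cᴴ with hcD
  set Pm : Matrix (Fin 2) (Fin 2) ℂ := (-Complex.I) • H₀ - (1/2 : ℂ) • (Cᴴ * C) with hPm
  set Qm : Matrix (Fin 2) (Fin 2) ℂ := Complex.I • H₀ - (1/2 : ℂ) • (Cᴴ * C) with hQm
  set Zm : Matrix (Fin 2) (Fin 2) ℂ :=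
    (Cᴴ * C).trace • (1 : Matrix (Fin 2) (Fin 2) ℂ) - Cᴴ * C with hZm
  have hτ : ∀ s ∈ Icc t₀ T, ‖(C * ρ s * Cᴴ).trace‖ ≤ 8 * cC * cD * M := fun s hs =>
    norm_trace_triple_le C Cᴴ (ρ s) M hMnn (hM s hs)
  have hcCnn : 0 ≤ cC := esum_nonneg C
  have hcDnn : 0 ≤ cD := esum_nonneg Cᴴ
  have hPmnn : 0 ≤ esum Pm := esum_nonneg Pm
  have hQmnn : 0 ≤ esum Qm := esum_nonneg Qm
  have hZmnn : 0 ≤ esum Zm := esum_nonneg Zm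
  have h8nn : 0 ≤ 8 * cC * cD * M :=
    mul_nonneg (mul_nonneg (mul_nonneg (by norm_num) hcCnn) hcDnn) hMnn
  -- Step 1 : the trace is 1 on [t₀, T]
  have htrace : ∀ s ∈ Icc t₀ T, (ρ s).trace = 1 := by
    have key : ∀ s ∈ Icc t₀ T, (fun r => ρ r 0 0 + ρ r 1 1 - 1) s = 0 := by
      apply gronwall_zero (K := 8 * cC * cD * M)
        (f' := fun s => (C * ρ s * Cᴴ).trace * (ρ s 0 0 + ρ s 1 1 - 1))
      · exact (((hcont 0 0).add (hcont 1 1)).sub continuousOn_const)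
      · intro s hs
        have h1 := ((hode' s hs 0 0).add (hode' s hs 1 1)).sub_const 1
        convert h1 using 1
        · rfl
        have h2 := trace_field H₀ C (ρ s)
        simp only [Matrix.trace_fin_two] at h2 ⊢
        linear_combination h2.symm
      · rw [Matrix.trace_fin_two] at hTr₀
        simp [hTr₀]
      · intro s hs
        rw [norm_mul]
        exact mul_le_mul_of_nonneg_right (hτ s (Ico_subset_Icc_self hs)) (norm_nonneg _)
    intro s hs
    have := key s hs
    rw [Matrix.trace_fin_two]
    linear_combination this
  -- Step 2 : hermiticity on [t₀, T]
  have hherm : ∀ s ∈ Icc t₀ T, (ρ s)ᴴ = ρ s := by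
    set σf : ℝ → (Fin 2 × Fin 2) → ℂ :=
      fun s p => ρ s p.1 p.2 - star (ρ s p.2 p.1) with hσf
    have hσent : ∀ s, ∀ i j : Fin 2, (ρ s - (ρ s)ᴴ) i j = σf s (i, j) := fun s i j => by
      rw [Matrix.sub_apply, conjTranspose_apply]
    have key : ∀ s ∈ Icc t₀ T, σf s = 0 := by
      apply gronwall_zero (K := 2 * esum Pm + 2 * esum Qm + 8 * cC * cD * M + 8 * cC * cD * M)
        (f' := fun s p => (belavkinField H₀ C (ρ s) - belavkinField H₀ C ((ρ s)ᴴ)) p.1 p.2)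
      · exact continuousOn_pi.mpr fun p => (hcont p.1 p.2).sub (hcont p.2 p.1).star
      · intro s hs
        rw [hasDerivWithinAt_pi]
        intro p
        have h1 := (hode' s hs p.1 p.2).sub ((hode' s hs p.2 p.1).star)
        convert h1 using 1
        · rfl
        have h3 := congrFun (congrFun (field_conjTranspose H₀ C (ρ s) hH) p.1) p.2
        rw [conjTranspose_apply] at h3
        rw [Matrix.sub_apply, ← h3]
      · funext p
        have := congrFun (congrFun hHerm₀ p.1) p.2
        rw [conjTranspose_apply] at this
        simp only [hσf, this, sub_self, Pi.zero_apply]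
      · intro s hs
        have hsI : s ∈ Icc t₀ T := Ico_subset_Icc_self hs
        set ss : ℝ := ‖σf s‖ with hss
        have hssnn : (0:ℝ) ≤ ss := norm_nonneg _
        have hσe : ∀ i j : Fin 2, ‖(ρ s - (ρ s)ᴴ) i j‖ ≤ ss := fun i j => by
          rw [hσent s i j]; exact norm_le_pi_norm (σf s) (i, j)
        have h1 : ∀ i j : Fin 2, ‖(Pm * (ρ s - (ρ s)ᴴ)) i j‖ ≤ 2 * esum Pm * ss :=
          norm_mul_entry_le Pm _ ss hσe
        have h2 : ∀ i j : Fin 2, ‖((ρ s - (ρ s)ᴴ) * Qm) i j‖ ≤ 2 * ss * esum Qm :=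
          norm_mul_entry_le' _ Qm ss hssnn hσe
        have h3 : ‖(C * (ρ s - (ρ s)ᴴ) * Cᴴ).trace‖ ≤ 8 * cC * cD * ss :=
          norm_trace_triple_le C Cᴴ _ ss hssnn hσe
        have h4 : ‖(C * (ρ s)ᴴ * Cᴴ).trace‖ ≤ 8 * cC * cD * M :=
          norm_trace_triple_le C Cᴴ _ M hMnn (hMH s hsI)
        rw [pi_norm_le_iff_of_nonneg (mul_nonneg (by linarith) hssnn)]
        intro p
        have hid := congrFun (congrFun (field_sub_identity H₀ C (ρ s) ((ρ s)ᴴ)) p.1) p.2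
        rw [hid]
        rw [show (Pm * (ρ s - (ρ s)ᴴ) + (ρ s - (ρ s)ᴴ) * Qm
              + (C * (ρ s - (ρ s)ᴴ) * Cᴴ).trace • ρ s
              + (C * (ρ s)ᴴ * Cᴴ).trace • (ρ s - (ρ s)ᴴ)) p.1 p.2
            = (Pm * (ρ s - (ρ s)ᴴ)) p.1 p.2 + ((ρ s - (ρ s)ᴴ) * Qm) p.1 p.2
              + (C * (ρ s - (ρ s)ᴴ) * Cᴴ).trace * ρ s p.1 p.2
              + (C * (ρ s)ᴴ * Cᴴ).trace * (ρ s - (ρ s)ᴴ) p.1 p.2 from by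
          simp [Matrix.add_apply, Matrix.smul_apply, smul_eq_mul]]
        calc ‖_ + _ + _ + _‖ ≤ ‖(Pm * (ρ s - (ρ s)ᴴ)) p.1 p.2‖ + ‖((ρ s - (ρ s)ᴴ) * Qm) p.1 p.2‖
              + ‖(C * (ρ s - (ρ s)ᴴ) * Cᴴ).trace * ρ s p.1 p.2‖
              + ‖(C * (ρ s)ᴴ * Cᴴ).trace * (ρ s - (ρ s)ᴴ) p.1 p.2‖ := norm_add₄_le' _ _ _ _
          _ ≤ 2 * esum Pm * ss + 2 * ss * esum Qm + (8 * cC * cD * ss) * M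
              + (8 * cC * cD * M) * ss := by
            refine add_le_add (add_le_add (add_le_add (h1 p.1 p.2) (h2 p.1 p.2)) ?_) ?_
            · rw [norm_mul]
              exact mul_le_mul h3 (hM s hsI p.1 p.2) (norm_nonneg _)
                (mul_nonneg (mul_nonneg (mul_nonneg (by norm_num) hcCnn) hcDnn) hssnn)
            · rw [norm_mul]
              exact mul_le_mul h4 (hσe p.1 p.2) (norm_nonneg _) h8nn
          _ = (2 * esum Pm + 2 * esum Qm + 8 * cC * cD * M + 8 * cC * cD * M) * ss := by ring
    intro s hs
    ext i j
    have := congrFun (key s hs) (j, i)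
    simp only [hσf, Pi.zero_apply, sub_eq_zero] at this
    rw [conjTranspose_apply, this, star_star]
  -- Step 3 : idempotency on [t₀, T]
  have hidem : ∀ s ∈ Icc t₀ T, ρ s * ρ s = ρ s := by
    set Ef : ℝ → (Fin 2 × Fin 2) → ℂ := fun s p => (ρ s * ρ s - ρ s) p.1 p.2 with hEf
    have key : ∀ s ∈ Icc t₀ T, Ef s = 0 := by
      apply gronwall_zero
        (K := 2 * esum Pm + 2 * esum Qm + 2 * (8 * cC * cD * M) + esum Zm)
        (f' := fun s p => (Pm * (ρ s * ρ s - ρ s) + (ρ s * ρ s - ρ s) * Qm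
          + (2 * (C * ρ s * Cᴴ).trace) • (ρ s * ρ s - ρ s) + (ρ s).det • Zm) p.1 p.2)
      · refine continuousOn_pi.mpr fun p => ?_
        have : (fun s => Ef s p)
            = fun s => ρ s p.1 0 * ρ s 0 p.2 + ρ s p.1 1 * ρ s 1 p.2 - ρ s p.1 p.2 :=
          funext fun s => by
            simp [hEf, Matrix.mul_apply, Matrix.sub_apply, Fin.sum_univ_two]
        rw [hEf]
        simp only []
        rw [show (fun s (p : Fin 2 × Fin 2) => (ρ s * ρ s - ρ s) p.1 p.2) = Ef from rfl] at *
        rw [this]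
        exact (((hcont p.1 0).mul (hcont 0 p.2)).add ((hcont p.1 1).mul (hcont 1 p.2))).sub
          (hcont p.1 p.2)
      · intro s hs
        rw [hasDerivWithinAt_pi]
        intro p
        have h1 := ((((hode' s hs p.1 0).mul (hode' s hs 0 p.2)).add
            ((hode' s hs p.1 1).mul (hode' s hs 1 p.2))).sub (hode' s hs p.1 p.2))
        refine HasDerivWithinAt.congr_deriv (h1.congr (fun y _ => ?_) ?_) ?_
        · simp [hEf, Matrix.mul_apply, Matrix.sub_apply, Fin.sum_univ_two]
        · simp [hEf, Matrix.mul_apply, Matrix.sub_apply, Fin.sum_univ_two]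
        · have h3 := congrFun (congrFun (field_sq_identity H₀ C (ρ s)) p.1) p.2
          rw [hPm, hQm, hZm]
          simp only [Matrix.mul_apply, Matrix.add_apply, Matrix.sub_apply, Matrix.smul_apply,
            Matrix.one_apply, Fin.sum_univ_two, smul_eq_mul] at h3 ⊢
          linear_combination h3
      · funext p
        simp only [hEf, hPP₀, sub_self, Matrix.zero_apply, Pi.zero_apply]
      · intro s hs
        have hsI : s ∈ Icc t₀ T := Ico_subset_Icc_self hs
        set e : ℝ := ‖Ef s‖ with he
        have henn : (0:ℝ) ≤ e := norm_nonneg _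
        have hEe : ∀ i j : Fin 2, ‖(ρ s * ρ s - ρ s) i j‖ ≤ e := fun i j =>
          norm_le_pi_norm (Ef s) (i, j)
        have h1 : ∀ i j : Fin 2, ‖(Pm * (ρ s * ρ s - ρ s)) i j‖ ≤ 2 * esum Pm * e :=
          norm_mul_entry_le Pm _ e hEe
        have h2 : ∀ i j : Fin 2, ‖((ρ s * ρ s - ρ s) * Qm) i j‖ ≤ 2 * e * esum Qm :=
          norm_mul_entry_le' _ Qm e henn hEe
        have hdet : ‖(ρ s).det‖ ≤ e := by
          rw [det_eq_of_trace_one (ρ s) (htrace s hsI)]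
          rw [show (-(((ρ s * ρ s - ρ s) 0 0) + ((ρ s * ρ s - ρ s) 1 1))/2 : ℂ)
              = -(((ρ s * ρ s - ρ s) 0 0) + ((ρ s * ρ s - ρ s) 1 1))/(2:ℂ) from rfl]
          rw [norm_div, norm_neg]
          have : ‖(2:ℂ)‖ = 2 := by norm_num
          rw [this]
          have := norm_add_le ((ρ s * ρ s - ρ s) 0 0) ((ρ s * ρ s - ρ s) 1 1)
          have h00 := hEe 0 0
          have h11 := hEe 1 1
          linarith
        rw [pi_norm_le_iff_of_nonneg (mul_nonneg (by linarith) henn)]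
        intro p
        rw [show (Pm * (ρ s * ρ s - ρ s) + (ρ s * ρ s - ρ s) * Qm
              + (2 * (C * ρ s * Cᴴ).trace) • (ρ s * ρ s - ρ s) + (ρ s).det • Zm) p.1 p.2
            = (Pm * (ρ s * ρ s - ρ s)) p.1 p.2 + ((ρ s * ρ s - ρ s) * Qm) p.1 p.2
              + (2 * (C * ρ s * Cᴴ).trace) * (ρ s * ρ s - ρ s) p.1 p.2
              + (ρ s).det * Zm p.1 p.2 from by
          simp [Matrix.add_apply, Matrix.smul_apply, smul_eq_mul]]
        calc ‖_ + _ + _ + _‖ ≤ ‖(Pm * (ρ s * ρ s - ρ s)) p.1 p.2‖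
              + ‖((ρ s * ρ s - ρ s) * Qm) p.1 p.2‖
              + ‖(2 * (C * ρ s * Cᴴ).trace) * (ρ s * ρ s - ρ s) p.1 p.2‖
              + ‖(ρ s).det * Zm p.1 p.2‖ := norm_add₄_le' _ _ _ _
          _ ≤ 2 * esum Pm * e + 2 * e * esum Qm + (2 * (8 * cC * cD * M)) * e
              + e * esum Zm := by
            refine add_le_add (add_le_add (add_le_add (h1 p.1 p.2) (h2 p.1 p.2)) ?_) ?_
            · rw [norm_mul, norm_mul]
              have h2n : ‖(2:ℂ)‖ = 2 := by norm_num
              rw [h2n]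
              refine mul_le_mul ?_ (hEe p.1 p.2) (norm_nonneg _) (by linarith)
              have := hτ s hsI
              linarith
            · rw [norm_mul]
              exact mul_le_mul hdet (norm_entry_le_esum Zm p.1 p.2) (norm_nonneg _) henn
          _ = (2 * esum Pm + 2 * esum Qm + 2 * (8 * cC * cD * M) + esum Zm) * e := by ring
    intro s hs
    ext i j
    have := congrFun (key s hs) (i, j)
    simp only [hEf, Pi.zero_apply, Matrix.sub_apply, sub_eq_zero] at this
    exact this
  have hTmem : T ∈ Icc t₀ T := ⟨hT, le_refl T⟩
  exact pure_of_proj (ρ T) (hidem T hTmem) (htrace T hTmem) (hherm T hTmem)
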